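/- The surface in P^4 defined by x0*x1 - x2*x3 = 0 and a0*x0^2 + a1*x1^2 + a2*x2^2 + a3*x3^2 + a4*x4^2 = 0 over a field k of characteristic not 2 is smooth if and only if (a0*a1 - a2*a3) * a0 * a1 * a2 * a3 * a4 ≠ 0. -/

import Mathlib

lemma rank_two_iff_li {K : Type} [Field K] (M : Matrix (Fin 2) (Fin 5) K) :
    M.rank = 2 ↔ LinearIndependent K M.row := by
  rw [M.rank_eq_finrank_span_row, linearIndependent_iff_card_eq_finrank_span, Set.finrank,
    Fintype.card_fin]
  exact eq_comm

lemma allzero {K : Type} [Field K] (x : Fin 5 → K) (g0 : x 0 = 0) (g1 : x 1 = 0)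
    (g2 : x 2 = 0) (g3 : x 3 = 0) (g4 : x 4 = 0) : x = 0 :=
  funext fun i => by fin_cases i <;> assumption

/-- The surface `x0*x1 - x2*x3 = 0`, `a0*x0^2 + ... + a4*x4^2 = 0` in `ℙ^4` over a field of
characteristic `≠ 2` is smooth (the Jacobian matrix has rank 2 at every point over an
algebraic closure) iff `(a0*a1 - a2*a3) * a0*a1*a2*a3*a4 ≠ 0`. -/
theorem smooth_iff_coeff_nonzero (K : Type) [Field K] [IsAlgClosed K] (h2 : (2 : K) ≠ 0)
    (a0 a1 a2 a3 a4 : K) :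
    (∀ x : Fin 5 → K, x ≠ 0 →
        x 0 * x 1 - x 2 * x 3 = 0 →
        a0 * (x 0) ^ 2 + a1 * (x 1) ^ 2 + a2 * (x 2) ^ 2 + a3 * (x 3) ^ 2 + a4 * (x 4) ^ 2 = 0 →
        (Matrix.of ![![x 1, x 0, -(x 3), -(x 2), 0],
            ![2 * a0 * x 0, 2 * a1 * x 1, 2 * a2 * x 2, 2 * a3 * x 3, 2 * a4 * x 4]]).rank = 2)
      ↔ (a0 * a1 - a2 * a3) * a0 * a1 * a2 * a3 * a4 ≠ 0 := by
  constructor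
  · intro hsm
    by_contra hprod
    by_cases h0 : a0 = 0
    · have H := hsm ![1,0,0,0,0] (by intro h; simpa using congr_fun h 0) (by simp)
        (by simp [h0])
      rw [rank_two_iff_li] at H
      exact H.ne_zero 1 (funext fun j => by fin_cases j <;> simp [h0])
    by_cases h1 : a1 = 0
    · have H := hsm ![0,1,0,0,0] (by intro h; simpa using congr_fun h 1) (by simp)
        (by simp [h1])
      rw [rank_two_iff_li] at H
      exact H.ne_zero 1 (funext fun j => by fin_cases j <;> simp [h1])
    by_cases h2' : a2 = 0
    · have H := hsm ![0,0,1,0,0] (by intro h; simpa using congr_fun h 2) (by simp)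
        (by simp [h2'])
      rw [rank_two_iff_li] at H
      exact H.ne_zero 1 (funext fun j => by fin_cases j <;> simp [h2'])
    by_cases h3 : a3 = 0
    · have H := hsm ![0,0,0,1,0] (by intro h; simpa using congr_fun h 3) (by simp)
        (by simp [h3])
      rw [rank_two_iff_li] at H
      exact H.ne_zero 1 (funext fun j => by fin_cases j <;> simp [h3])
    by_cases h4 : a4 = 0
    · have H := hsm ![0,0,0,0,1] (by intro h; simpa using congr_fun h 4) (by simp)
        (by simp [h4])
      rw [rank_two_iff_li] at H
      exact H.ne_zero 1 (funext fun j => by fin_cases j <;> simp [h4])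
    -- now all coefficients nonzero, so a0*a1 = a2*a3
    have hE : a0 * a1 - a2 * a3 = 0 := by
      simp [mul_eq_zero, h0, h1, h2', h3, h4] at hprod
      exact hprod
    obtain ⟨l, hl⟩ := IsAlgClosed.exists_pow_nat_eq ((4*a0*a1)⁻¹) (n := 2) (by norm_num)
    obtain ⟨w, hw⟩ := IsAlgClosed.exists_pow_nat_eq (-a0/a2) (n := 2) (by norm_num)
    have h4' : (4:K) ≠ 0 := by
      have : (4:K) = 2*2 := by norm_num
      rw [this]; exact mul_ne_zero h2 h2
    have hl' : 4*a0*a1*l^2 = 1 := by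
      rw [hl]; field_simp
    have hw' : a2 * w^2 = -a0 := by
      rw [hw]; field_simp
    set x : Fin 5 → K := ![1, 2*l*a0, w, -(2*l*a2*w), 0] with hxdef
    have H := hsm x (by intro h; simpa [hxdef] using congr_fun h 0)
      (by simp only [hxdef]; simp; linear_combination 2*l*hw')
      (by simp only [hxdef]; simp
          linear_combination (a0 + a2*w^2)*hl' - 4*l^2*a2*w^2*hE + 2*hw')
    rw [rank_two_iff_li, linearIndependent_fin2] at H
    refine H.2 l (funext fun j => ?_)
    fin_cases j
    · simp [hxdef]; try ring
    · simp [hxdef]; try linear_combination hl'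
    · simp [hxdef]; try ring
    · simp [hxdef]; linear_combination w*hl' - 4*l^2*w*hE
    · simp [hxdef]; try ring
  · intro hprod x hx hQ1 hQ2
    have h0 : a0 ≠ 0 := fun h => hprod (by rw [h]; ring)
    have h1 : a1 ≠ 0 := fun h => hprod (by rw [h]; ring)
    have h2' : a2 ≠ 0 := fun h => hprod (by rw [h]; ring)
    have h3 : a3 ≠ 0 := fun h => hprod (by rw [h]; ring)
    have h4 : a4 ≠ 0 := fun h => hprod (by rw [h]; ring)
    have hE : a0 * a1 - a2 * a3 ≠ 0 := fun h => hprod (by rw [h]; ring)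
    rw [rank_two_iff_li, linearIndependent_fin2]
    constructor
    · intro hz
      have e0 := congr_fun hz 0
      have e1 := congr_fun hz 1
      have e2 := congr_fun hz 2
      have e3 := congr_fun hz 3
      have e4 := congr_fun hz 4
      simp [mul_eq_zero, h2, h0, h1, h2', h3, h4] at e0 e1 e2 e3 e4
      exact hx (allzero x e0 e1 e2 e3 e4)
    · intro c hc
      have e0 := congr_fun hc 0
      have e1 := congr_fun hc 1
      have e2 := congr_fun hc 2
      have e3 := congr_fun hc 3
      have e4 := congr_fun hc 4
      simp [Pi.smul_apply, h2, h4] at e0 e1 e2 e3 e4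
      rcases e4 with hc0 | hx4
      · subst hc0
        simp only [zero_mul] at e0 e1 e2 e3
        have hx1 : x 1 = 0 := e0.symm
        have hx0 : x 0 = 0 := e1.symm
        have hx3 : x 3 = 0 := by simpa using e2.symm
        have hx2 : x 2 = 0 := by simpa using e3.symm
        have hx4 : x 4 = 0 := by
          have : a4 * x 4 ^ 2 = 0 := by linear_combination hQ2 - a0*x 0*hx0 - a1*x 1*hx1 - a2*x 2*hx2 - a3*x 3*hx3
          have := (mul_eq_zero.mp this).resolve_left h4
          exact pow_eq_zero_iff (two_ne_zero) |>.mp this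
        exact hx (allzero x hx0 hx1 hx2 hx3 hx4)
      · by_cases hc0 : c = 0
        · subst hc0
          simp only [zero_mul] at e0 e1 e2 e3
          have hx1 : x 1 = 0 := e0.symm
          have hx0 : x 0 = 0 := e1.symm
          have hx3 : x 3 = 0 := by simpa using e2.symm
          have hx2 : x 2 = 0 := by simpa using e3.symm
          have hx4' : x 4 = 0 := by
            have : a4 * x 4 ^ 2 = 0 := by linear_combination hQ2 - a0*x 0*hx0 - a1*x 1*hx1 - a2*x 2*hx2 - a3*x 3*hx3
            have := (mul_eq_zero.mp this).resolve_left h4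
            exact pow_eq_zero_iff (two_ne_zero) |>.mp this
          exact hx (allzero x hx0 hx1 hx2 hx3 hx4')
        · have k01 : x 0 * (4*c^2*a0*a1 - 1) = 0 := by linear_combination (2*c*a1)*e0 + e1
          have k23 : x 3 * (4*c^2*a2*a3 - 1) = 0 := by linear_combination -e2 + (2*c*a2)*e3
          by_cases h01 : 4*c^2*a0*a1 - 1 = 0
          · by_cases h23 : 4*c^2*a2*a3 - 1 = 0
            · refine hE ?_
              have h4c : (4:K)*c^2 ≠ 0 := by
                have : (4:K) = 2*2 := by norm_num
                rw [this]
                exact mul_ne_zero (mul_ne_zero h2 h2) (pow_ne_zero _ hc0)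
              apply mul_left_cancel₀ h4c
              linear_combination h01 - h23
            · have hx3 : x 3 = 0 := (mul_eq_zero.mp k23).resolve_right h23
              have hx2 : x 2 = 0 := by simpa [hx3] using e3.symm
              have hq : x 0 * x 1 = 0 := by linear_combination hQ1 + x 3 * hx2
              by_cases hx0 : x 0 = 0
              · have hx1 : x 1 = 0 := by simpa [hx0] using e0.symm
                exact hx (allzero x hx0 hx1 hx2 hx3 hx4)
              · have hx1 : x 1 = 0 := (mul_eq_zero.mp hq).resolve_left hx0
                exact hx0 (by simpa [hx1] using e1.symm)
          · have hx0 : x 0 = 0 := (mul_eq_zero.mp k01).resolve_right h01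
            have hx1 : x 1 = 0 := by simpa [hx0] using e0.symm
            have hq : x 2 * x 3 = 0 := by linear_combination -hQ1 + x 1 * hx0
            by_cases hx2 : x 2 = 0
            · have hx3 : x 3 = 0 := by simpa [hx2] using e2.symm
              exact hx (allzero x hx0 hx1 hx2 hx3 hx4)
            · have hx3 : x 3 = 0 := (mul_eq_zero.mp hq).resolve_left hx2
              exact hx2 (by simpa [hx3] using e3.symm)
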